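/- If the aggregate allocation graph AG of an aggregate allocation instance is acyclic, then there exists a type-homogeneous strict preference profile under which the allocation x is both Pareto efficient and individually rational. -/
import Mathlib

private lemma exists_linear_ext {α : Type*} (B : α → α → Prop)
    (hB : ∀ a, ¬ Relation.TransGen B a a) :
    ∃ le : α → α → Prop, IsLinearOrder α le ∧ ∀ a b, B a b → le b a := by
  classical
  let r : α → α → Prop := fun a b => a = b ∨ Relation.TransGen B b a
  haveI : IsPartialOrder α r := by
    refine { refl := fun a => Or.inl rfl, trans := ?_, antisymm := ?_ }
    · rintro a b c (rfl | hba) (rfl | hcb)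
      · exact Or.inl rfl
      · exact Or.inr hcb
      · exact Or.inr hba
      · exact Or.inr (hcb.trans hba)
    · rintro a b (rfl | hba) h2
      · rfl
      · rcases h2 with rfl | hab
        · rfl
        · exact absurd (hab.trans hba) (hB a)
  obtain ⟨s, hs, hrs⟩ := extend_partialOrder r
  exact ⟨s, hs, fun a b h => hrs b a (Or.inr (Relation.TransGen.single h))⟩

private lemma exists_rank {α : Type*} [Fintype α] (B : α → α → Prop)
    (hB : ∀ a, ¬ Relation.TransGen B a a) :
    ∃ ρ : α → ℕ, Function.Injective ρ ∧ ∀ a b, B a b → ρ b < ρ a := by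
  classical
  obtain ⟨le, hle, hext⟩ := exists_linear_ext B hB
  haveI := hle
  set ρ : α → ℕ := fun a => (Finset.univ.filter fun c => le c a ∧ c ≠ a).card with hρ
  have mono : ∀ a b, le a b → a ≠ b → ρ a < ρ b := by
    intro a b hab hne
    apply Finset.card_lt_card
    rw [Finset.ssubset_def]
    constructor
    · intro c hc
      simp only [Finset.mem_filter, Finset.mem_univ, true_and] at hc ⊢
      refine ⟨trans_of le hc.1 hab, ?_⟩
      rintro rfl
      exact hne (antisymm_of le hab hc.1)
    · intro hsub
      have ha : a ∈ Finset.univ.filter fun c => le c b ∧ c ≠ b := by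
        simp only [Finset.mem_filter, Finset.mem_univ, true_and]
        exact ⟨hab, hne⟩
      have ha2 := hsub ha
      simp only [Finset.mem_filter, Finset.mem_univ, true_and] at ha2
      exact ha2.2 rfl
  refine ⟨ρ, ?_, ?_⟩
  · intro a b hab
    by_contra hne
    rcases total_of le a b with h | h
    · exact absurd hab (ne_of_lt (mono a b h hne))
    · exact absurd hab.symm (ne_of_lt (mono b a h (Ne.symm hne)))
  · intro a b h
    have hne : a ≠ b := by rintro rfl; exact hB a (Relation.TransGen.single h)
    exact mono b a (hext a b h) (Ne.symm hne)

/-- if the aggregate allocation graph is acyclic, there is a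
type-homogeneous strict linear preference profile making `x` Pareto efficient
and individually rational. -/
theorem stmt_8 {I H T : Type*} [Fintype I] [Fintype H]
    (τ : I → T) (x ω : I → H)
    (hAG : ∀ h : H, ¬ Relation.TransGen
      (fun h h' : H => ∃ i j : I, τ i = τ j ∧ ω j = h ∧ x j = h' ∧ h' ≠ h ∧ x i = h)
      h h) :
    ∃ P : T → H → H → Prop,
      (∀ t : T, ∀ a b : H, P t a b → ¬ P t b a) ∧
      (∀ t : T, ∀ a b c : H, P t a b → P t b c → P t a c) ∧
      (∀ t : T, ∀ a b : H, a ≠ b → P t a b ∨ P t b a) ∧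
      (∀ i : I, x i = ω i ∨ P (τ i) (x i) (ω i)) ∧
      (¬ ∃ σ : Equiv.Perm I,
        (∀ i : I, x (σ i) = x i ∨ P (τ i) (x (σ i)) (x i)) ∧
        (∃ i : I, P (τ i) (x (σ i)) (x i))) := by
  classical
  obtain ⟨ρ, ρinj, ρE⟩ := exists_rank
    (fun h h' : H => ∃ i j : I, τ i = τ j ∧ ω j = h ∧ x j = h' ∧ h' ≠ h ∧ x i = h) hAG
  set S : T → H → Prop := fun t h => ∃ i, τ i = t ∧ x i = h with hS
  set B : T → H → H → Prop := fun t a b =>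
    (S t a ∧ (∃ i, x i = b) ∧ ρ a < ρ b) ∨ (∃ j, τ j = t ∧ ω j = b ∧ x j = a ∧ a ≠ b) with hB
  have hsrc : ∀ t a b, B t a b → S t a := by
    rintro t a b (⟨h, -, -⟩ | ⟨j, hj, -, hx, -⟩)
    · exact h
    · exact ⟨j, hj, hx⟩
  have hkey : ∀ t a b, B t a b → S t b → ρ a < ρ b := by
    rintro t a b (⟨-, -, h⟩ | ⟨j, hj, hω, hx, hne⟩) hSb
    · exact h
    · obtain ⟨i, hi, hxi⟩ := hSb
      exact ρE b a ⟨i, j, by rw [hi, hj], hω, hx, hne, hxi⟩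
  have hchain : ∀ t a b, Relation.TransGen (B t) a b → S t b → ρ a < ρ b := by
    intro t a b h
    induction h with
    | single h => exact fun hb => hkey _ _ _ h hb
    | tail h hbc ih => exact fun hc => lt_trans (ih (hsrc _ _ _ hbc)) (hkey _ _ _ hbc hc)
  have hacyc : ∀ t a, ¬ Relation.TransGen (B t) a a := by
    intro t a hloop
    have hSa : S t a := by
      obtain ⟨c, hc, -⟩ := Relation.TransGen.head'_iff.mp hloop
      exact hsrc _ _ _ hc
    exact lt_irrefl _ (hchain t a a hloop hSa)
  choose le hle hext using fun t => exists_linear_ext (B t) (hacyc t)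
  refine ⟨fun t a b => le t b a ∧ a ≠ b, ?_, ?_, ?_, ?_, ?_⟩
  · rintro t a b ⟨h1, hne⟩ ⟨h2, -⟩
    haveI := hle t
    exact hne (antisymm_of (le t) h2 h1)
  · rintro t a b c ⟨h1, hne1⟩ ⟨h2, hne2⟩
    haveI := hle t
    refine ⟨trans_of (le t) h2 h1, ?_⟩
    rintro rfl
    exact hne1 (antisymm_of (le t) h2 h1)
  · intro t a b hne
    haveI := hle t
    rcases total_of (le t) a b with h | h
    · exact Or.inr ⟨h, Ne.symm hne⟩
    · exact Or.inl ⟨h, hne⟩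
  · intro i
    by_cases h : x i = ω i
    · exact Or.inl h
    · exact Or.inr ⟨hext (τ i) (x i) (ω i) (Or.inr ⟨i, rfl, rfl, rfl, h⟩), h⟩
  · rintro ⟨σ, hweak, i0, hstrict⟩
    have hlt : ∀ i, le (τ i) (x i) (x (σ i)) ∧ x (σ i) ≠ x i → ρ (x (σ i)) < ρ (x i) := by
      rintro i ⟨hle', hne⟩
      rcases lt_or_ge (ρ (x (σ i))) (ρ (x i)) with h | h
      · exact h
      have hlt2 : ρ (x i) < ρ (x (σ i)) :=
        lt_of_le_of_ne h (fun hc => hne (ρinj hc.symm))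
      have hBe : B (τ i) (x i) (x (σ i)) := Or.inl ⟨⟨i, rfl, rfl⟩, ⟨σ i, rfl⟩, hlt2⟩
      have h2 := hext (τ i) _ _ hBe
      haveI := hle (τ i)
      exact absurd (antisymm_of (le (τ i)) hle' h2).symm hne
    have hsum : ∑ i, ρ (x (σ i)) < ∑ i, ρ (x i) := by
      apply Finset.sum_lt_sum
      · intro i _
        rcases hweak i with h | h
        · rw [h]
        · exact le_of_lt (hlt i h)
      · exact ⟨i0, Finset.mem_univ _, hlt i0 hstrict⟩
    rw [Equiv.sum_comp σ (fun i => ρ (x i))] at hsum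
    exact lt_irrefl _ hsum
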